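/- For any square real matrices Γ₁ and Γ₂ with Γ₁ symmetric positive semidefinite and Γ₂ symmetric positive semidefinite, tr(Γ₁Γ₂Γ₁Γ₂) ≤ tr(Γ₁²Γ₂²). -/

import Mathlib

open Matrix

private lemma psd_trace_nonneg' {d : ℕ} {M : Matrix (Fin d) (Fin d) ℝ}
    (h : M.PosSemidef) : 0 ≤ M.trace := by
  rw [Matrix.trace]
  apply Finset.sum_nonneg
  intro i _
  exact h.diag_nonneg

private lemma cyc4 {d : ℕ} (A B C D : Matrix (Fin d) (Fin d) ℝ) :
    (A * (B * (C * D))).trace = (B * (C * (D * A))).trace := by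
  rw [trace_mul_comm]; simp [mul_assoc]

theorem trace_psd_product_inequality
    {d : ℕ} (Γ₁ Γ₂ : Matrix (Fin d) (Fin d) ℝ)
    (h₁ : Γ₁.PosSemidef) (h₂ : Γ₂.PosSemidef) :
    (Γ₁ * Γ₂ * Γ₁ * Γ₂).trace ≤ (Γ₁ ^ 2 * Γ₂ ^ 2).trace := by
  have hA : Γ₁ᴴ = Γ₁ := h₁.1
  have hB : Γ₂ᴴ = Γ₂ := h₂.1
  have key := psd_trace_nonneg' (Matrix.posSemidef_conjTranspose_mul_self (Γ₁ * Γ₂ - Γ₂ * Γ₁))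
  have hX : (Γ₁ ^ 2 * Γ₂ ^ 2).trace = (Γ₁ * (Γ₁ * (Γ₂ * Γ₂))).trace := by
    simp [pow_two, mul_assoc]
  have hY : (Γ₁ * Γ₂ * Γ₁ * Γ₂).trace = (Γ₁ * (Γ₂ * (Γ₁ * Γ₂))).trace := by
    simp [mul_assoc]
  have e : ((Γ₁ * Γ₂ - Γ₂ * Γ₁)ᴴ * (Γ₁ * Γ₂ - Γ₂ * Γ₁)).trace
      = 2 * (Γ₁ ^ 2 * Γ₂ ^ 2).trace - 2 * (Γ₁ * Γ₂ * Γ₁ * Γ₂).trace := by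
    simp only [conjTranspose_sub, conjTranspose_mul, hA, hB, sub_mul, mul_sub,
      trace_sub, mul_assoc]
    rw [cyc4 Γ₂ Γ₁ Γ₁ Γ₂, cyc4 Γ₂ Γ₁ Γ₂ Γ₁,
      cyc4 Γ₁ Γ₂ Γ₂ Γ₁, cyc4 Γ₂ Γ₂ Γ₁ Γ₁, cyc4 Γ₂ Γ₁ Γ₁ Γ₂, hX]
    ring
  linarith
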